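/- Let A be the adjacency matrix of the halved hypercube graph ½Q_{n+1} = Q_n², the Cayley graph of (Z/2)^n with generating set {ε_i} ∪ {ε_i + ε_j : i < j}. Then τ_μ is an eigenvector of A with eigenvalue λ_d = ((2d − n − 1)² − n − 1)/2, where d = deg(μ). -/

import Mathlib

open Finset

private lemma zmod2_key (a b c : ZMod 2) :
    (-1:ℂ)^((a+b).val * c.val) = (-1)^(a.val*c.val) * (-1)^(b.val*c.val) := by
  have h : ∀ a b c : ZMod 2, (a+b).val*c.val % 2 = (a.val*c.val + b.val*c.val) % 2 := by decide
  rw [← pow_add, neg_one_pow_eq_pow_mod_two, h, ← neg_one_pow_eq_pow_mod_two]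

private lemma zmod2_eq_one {x : ZMod 2} (h : x ≠ 0) : x = 1 := by
  revert x; decide

theorem halved_hypercube_character_eigenvector (n : ℕ) (μ : Fin n → ZMod 2)
    (A : Matrix (Fin n → ZMod 2) (Fin n → ZMod 2) ℂ)
    (hA : ∀ α β, A α β =
      if (Finset.univ.filter (fun i => α i ≠ β i)).card = 1 ∨
         (Finset.univ.filter (fun i => α i ≠ β i)).card = 2 then 1 else 0) :
    A.mulVec (fun α => (-1 : ℂ) ^ (∑ i, (α i).val * (μ i).val)) =
      (((2 * ((Finset.univ.filter (fun i => μ i ≠ 0)).card : ℂ) - n - 1) ^ 2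
          - n - 1) / 2) •
        (fun α => (-1 : ℂ) ^ (∑ i, (α i).val * (μ i).val)) := by
  classical
  set d := (Finset.univ.filter (fun i => μ i ≠ 0)).card with hd
  set χ : (Fin n → ZMod 2) → ℂ :=
    fun γ => (-1 : ℂ) ^ (∑ i, (γ i).val * (μ i).val) with hχ
  set x : Fin n → ℂ := fun i => (-1 : ℂ) ^ ((μ i).val) with hx
  -- multiplicativity of χ
  have hmul : ∀ a b : Fin n → ZMod 2, χ (a + b) = χ a * χ b := by
    intro a b
    simp only [hχ]
    rw [← Finset.prod_pow_eq_pow_sum, ← Finset.prod_pow_eq_pow_sum,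
      ← Finset.prod_pow_eq_pow_sum, ← Finset.prod_mul_distrib]
    exact Finset.prod_congr rfl fun i _ => zmod2_key (a i) (b i) (μ i)
  set e : Fin n → (Fin n → ZMod 2) := fun i => Pi.single i 1 with he
  have hsupp1 : ∀ i, (Finset.univ.filter fun j => e i j ≠ 0) = {i} := by
    intro i; ext j
    simp only [Finset.mem_filter, Finset.mem_univ, true_and, Finset.mem_singleton,
      he, Pi.single_apply]
    by_cases h : j = i <;> simp [h]
  have hχe : ∀ i, χ (e i) = x i := by
    intro i
    simp only [hχ, hx]
    congr 1
    rw [Finset.sum_eq_single i]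
    · simp [he, show ((1:ZMod 2)).val = 1 from rfl]
    · intro j _ hj
      simp [he, Pi.single_eq_of_ne hj]
    · simp
  have he_inj : Function.Injective e := by
    intro i j h
    by_contra hne
    have h2 := congrFun h i
    simp only [he] at h2
    rw [Pi.single_eq_same, Pi.single_eq_of_ne hne] at h2
    exact one_ne_zero h2
  have hset1 : (Finset.univ.filter fun γ : Fin n → ZMod 2 =>
        (Finset.univ.filter fun i => γ i ≠ 0).card = 1) = Finset.univ.image e := by
    ext γ
    simp only [Finset.mem_filter, Finset.mem_univ, true_and, Finset.mem_image]
    constructor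
    · intro h
      obtain ⟨i, hi⟩ := Finset.card_eq_one.mp h
      refine ⟨i, ?_⟩
      funext j
      by_cases hj : j = i
      · subst hj
        have hne : γ j ≠ 0 := by
          have hm : j ∈ ({j} : Finset (Fin n)) := Finset.mem_singleton_self j
          rw [← hi] at hm
          simpa using hm
        rw [he]
        simp [zmod2_eq_one hne]
      · have hz : γ j = 0 := by
          by_contra hz
          have hm : j ∈ Finset.univ.filter (fun i => γ i ≠ 0) := by simp [hz]
          rw [hi] at hm
          exact hj (by simpa using hm)
        rw [hz, he]
        simp [Pi.single_eq_of_ne hj]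
    · rintro ⟨i, -, rfl⟩
      rw [hsupp1 i]
      simp
  have hS1 : ∑ γ ∈ (Finset.univ.filter fun γ : Fin n → ZMod 2 =>
        (Finset.univ.filter fun i => γ i ≠ 0).card = 1), χ γ = ∑ i, x i := by
    rw [hset1, Finset.sum_image (fun i _ j _ h => he_inj h)]
    exact Finset.sum_congr rfl fun i _ => hχe i
  have hdn : d ≤ n := by
    calc d ≤ (Finset.univ : Finset (Fin n)).card := Finset.card_filter_le _ _
    _ = n := by simp
  have hT : ∑ i, x i = (n:ℂ) - 2*d := by
    rw [← Finset.sum_filter_add_sum_filter_not Finset.univ (fun i => μ i ≠ 0)]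
    have h1 : ∀ i ∈ Finset.univ.filter (fun i => μ i ≠ 0), x i = -1 := by
      intro i hi
      simp only [Finset.mem_filter] at hi
      simp [hx, zmod2_eq_one hi.2, show ((1:ZMod 2)).val = 1 from rfl]
    have h2 : ∀ i ∈ Finset.univ.filter (fun i => ¬ μ i ≠ 0), x i = 1 := by
      intro i hi
      simp only [Finset.mem_filter, not_not] at hi
      simp [hx, hi.2]
    rw [Finset.sum_congr rfl h1, Finset.sum_congr rfl h2]
    have hcard : (Finset.univ.filter (fun i => ¬ μ i ≠ 0)).card = n - d := by
      have h3 := Finset.card_filter_add_card_filter_not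
        (s := (Finset.univ : Finset (Fin n))) (p := fun i => μ i ≠ 0)
      simp only [Finset.card_univ, Fintype.card_fin] at h3
      omega
    simp only [Finset.sum_const, nsmul_eq_mul, mul_one, mul_neg_one]
    rw [hcard, ← hd]
    push_cast [hdn]
    ring
  have hsupp2 : ∀ i j : Fin n, i ≠ j →
      (Finset.univ.filter fun k => (e i + e j) k ≠ 0) = {i, j} := by
    intro i j hij
    ext k
    simp only [Finset.mem_filter, Finset.mem_univ, true_and, Finset.mem_insert,
      Finset.mem_singleton, Pi.add_apply, he, Pi.single_apply]
    by_cases hki : k = i <;> by_cases hkj : k = j <;> simp_all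
  have hpair_inj : ∀ i j i' j' : Fin n, i < j → i' < j' →
      e i + e j = e i' + e j' → (i, j) = (i', j') := by
    intro i j i' j' hij hij' hEq
    have hs : ({i, j} : Finset (Fin n)) = {i', j'} := by
      rw [← hsupp2 i j (ne_of_lt hij), ← hsupp2 i' j' (ne_of_lt hij'), hEq]
    have hi : i = i' ∨ i = j' := by
      have hm : i ∈ ({i', j'} : Finset (Fin n)) := hs ▸ (by simp)
      simpa using hm
    have hj : j = i' ∨ j = j' := by
      have hm : j ∈ ({i', j'} : Finset (Fin n)) := hs ▸ (by simp)
      simpa using hm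
    have hvi : i.val = i'.val ∨ i.val = j'.val := hi.imp (congrArg Fin.val) (congrArg Fin.val)
    have hvj : j.val = i'.val ∨ j.val = j'.val := hj.imp (congrArg Fin.val) (congrArg Fin.val)
    have h1 : i.val < j.val := hij
    have h2 : i'.val < j'.val := hij'
    have : i = i' ∧ j = j' := ⟨Fin.ext (by omega), Fin.ext (by omega)⟩
    rw [this.1, this.2]
  have hset2 : (Finset.univ.filter fun γ : Fin n → ZMod 2 =>
        (Finset.univ.filter fun i => γ i ≠ 0).card = 2)
      = (Finset.univ.filter fun p : Fin n × Fin n => p.1 < p.2).image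
          (fun p => e p.1 + e p.2) := by
    ext γ
    simp only [Finset.mem_filter, Finset.mem_univ, true_and, Finset.mem_image]
    constructor
    · intro h
      obtain ⟨i, j, hij, hs⟩ := Finset.card_eq_two.mp h
      have key : ∀ i j : Fin n, i ≠ j →
          (Finset.univ.filter fun k => γ k ≠ 0) = {i, j} → γ = e i + e j := by
        clear hij hs
        intro i j hij hs
        funext k
        have hmem : γ k ≠ 0 ↔ (k = i ∨ k = j) := by
          constructor
          · intro hk
            have hm : k ∈ Finset.univ.filter fun k => γ k ≠ 0 := by simp [hk]
            rw [hs] at hm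
            simpa using hm
          · intro hk
            have hm : k ∈ ({i, j} : Finset (Fin n)) := by simpa using hk
            rw [← hs] at hm
            simpa using hm
        rcases eq_or_ne k i with rfl | hki
        · rw [zmod2_eq_one (hmem.mpr (Or.inl rfl))]
          simp [he, Pi.single_apply, Pi.add_apply, Ne.symm hij]
        · rcases eq_or_ne k j with rfl | hkj
          · rw [zmod2_eq_one (hmem.mpr (Or.inr rfl))]
            simp [he, Pi.single_apply, Pi.add_apply, hki]
          · have h0 : γ k = 0 := by
              by_contra h0
              rcases hmem.mp h0 with hc | hc
              exacts [hki hc, hkj hc]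
            rw [h0]
            simp [he, Pi.single_apply, Pi.add_apply, hki, hkj]
      rcases lt_or_gt_of_ne hij with hlt | hlt
      · exact ⟨(i, j), by simpa using hlt, (key i j hij hs).symm⟩
      · exact ⟨(j, i), by simpa using hlt,
          (key j i hij.symm (by rw [hs, Finset.pair_comm])).symm⟩
    · rintro ⟨p, hp, rfl⟩
      have hlt : p.1 < p.2 := by simpa using hp
      rw [hsupp2 p.1 p.2 (ne_of_lt hlt)]
      exact Finset.card_pair (ne_of_lt hlt)
  set P : Finset (Fin n × Fin n) := Finset.univ.filter (fun p => p.1 < p.2) with hP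
  have hS2 : ∑ γ ∈ (Finset.univ.filter fun γ : Fin n → ZMod 2 =>
        (Finset.univ.filter fun i => γ i ≠ 0).card = 2), χ γ
      = ∑ p ∈ P, x p.1 * x p.2 := by
    rw [hset2, Finset.sum_image]
    · refine Finset.sum_congr rfl fun p hp => ?_
      rw [hmul, hχe, hχe]
    · intro p hp q hq h
      have := hpair_inj p.1 p.2 q.1 q.2 (by simpa [hP] using hp) (by simpa [hP] using hq) h
      rwa [Prod.mk.eta, Prod.mk.eta] at this
  have hsq : ∀ i, x i * x i = 1 := by
    intro i
    simp only [hx]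
    rw [← pow_add]
    exact Even.neg_one_pow ⟨(μ i).val, rfl⟩
  have hdouble : (∑ p ∈ P, x p.1 * x p.2) + (∑ p ∈ P, x p.1 * x p.2) + (n:ℂ)
      = (∑ i, x i)^2 := by
    rw [sq, Finset.sum_mul_sum, ← Fintype.sum_prod_type']
    rw [← Finset.sum_filter_add_sum_filter_not Finset.univ
      (fun p : Fin n × Fin n => p.1 < p.2) (fun p => x p.1 * x p.2)]
    rw [← Finset.sum_filter_add_sum_filter_not
      (Finset.univ.filter (fun p : Fin n × Fin n => ¬ p.1 < p.2))
      (fun p => p.2 < p.1) (fun p => x p.1 * x p.2)]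
    have hB : (Finset.univ.filter (fun p : Fin n × Fin n => ¬ p.1 < p.2)).filter
        (fun p => p.2 < p.1) = Finset.univ.filter (fun p : Fin n × Fin n => p.2 < p.1) := by
      ext p
      simp only [Finset.mem_filter, Finset.mem_univ, true_and]
      exact ⟨fun h => h.2, fun h => ⟨lt_asymm h, h⟩⟩
    have hC : (Finset.univ.filter (fun p : Fin n × Fin n => ¬ p.1 < p.2)).filter
        (fun p => ¬ p.2 < p.1) = Finset.univ.filter (fun p : Fin n × Fin n => p.1 = p.2) := by
      ext p
      simp only [Finset.mem_filter, Finset.mem_univ, true_and, not_lt]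
      constructor
      · rintro ⟨h1, h2⟩
        exact le_antisymm h2 h1
      · rintro h
        exact ⟨le_of_eq h.symm, le_of_eq h⟩
    have hBsum : ∑ p ∈ Finset.univ.filter (fun p : Fin n × Fin n => p.2 < p.1),
        x p.1 * x p.2 = ∑ p ∈ P, x p.1 * x p.2 := by
      refine Finset.sum_equiv (Equiv.prodComm (Fin n) (Fin n)) ?_ ?_
      · intro p
        simp [hP]
      · intro p hp
        exact mul_comm _ _
    have hCsum : ∑ p ∈ Finset.univ.filter (fun p : Fin n × Fin n => p.1 = p.2),
        x p.1 * x p.2 = (n:ℂ) := by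
      have himg : Finset.univ.filter (fun p : Fin n × Fin n => p.1 = p.2)
          = Finset.univ.image (fun i => (i, i)) := by
        ext p
        simp only [Finset.mem_filter, Finset.mem_univ, true_and, Finset.mem_image]
        constructor
        · intro h
          exact ⟨p.1, by rw [Prod.ext_iff]; exact ⟨rfl, h⟩⟩
        · rintro ⟨i, rfl⟩
          rfl
      rw [himg, Finset.sum_image (fun i _ j _ h => (Prod.ext_iff.mp h).1)]
      simp [hsq, Finset.card_univ]
    rw [hB, hC, hBsum, hCsum]
    ring
  -- main computation
  funext α
  simp only [Matrix.mulVec, dotProduct, hA, Pi.smul_apply, smul_eq_mul]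
  have h1 : ∀ γ : Fin n → ZMod 2, (Finset.univ.filter fun i => α i ≠ (α + γ) i)
      = Finset.univ.filter fun i => γ i ≠ 0 := by
    intro γ
    apply Finset.filter_congr
    intro i _
    simp [left_eq_add]
  have step1 : (∑ β, (if (Finset.univ.filter fun i => α i ≠ β i).card = 1 ∨
        (Finset.univ.filter fun i => α i ≠ β i).card = 2 then (1:ℂ) else 0) * χ β)
      = ∑ γ, (if (Finset.univ.filter fun i => γ i ≠ 0).card = 1 ∨
        (Finset.univ.filter fun i => γ i ≠ 0).card = 2 then (1:ℂ) else 0) * (χ α * χ γ) := by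
    refine (Fintype.sum_equiv (Equiv.addLeft α) _ _ fun γ => ?_).symm
    simp only [Equiv.coe_addLeft]
    rw [hmul]
    simp [h1 γ]
  rw [step1]
  simp only [ite_mul, one_mul, zero_mul, ← Finset.sum_filter]
  rw [← Finset.mul_sum, Finset.filter_or, Finset.sum_union (by
    simp only [Finset.disjoint_left, Finset.mem_filter]
    rintro γ ⟨-, hg1⟩ ⟨-, hg2⟩
    omega)]
  rw [hS1, hS2, hT]
  have hs2' : (∑ p ∈ P, x p.1 * x p.2) + (∑ p ∈ P, x p.1 * x p.2) + (n:ℂ)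
      = ((n:ℂ) - 2*d)^2 := by rw [hdouble, hT]
  linear_combination (χ α / 2) * hs2'
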